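/- For every n ≥ 0 there exists an indecomposable representation M of Q with dimension vector (n+1, n, n, n) together with a short exact sequence of representations 0 → P₂ ⊕ P₃ ⊕ P₄ⁿ → P₁ⁿ⁺¹ → M → 0. -/

import Mathlib

variable (k : Type) [Field k]

/-- A finite-dimensional representation of the quiver `Q` with vertices `1,2,3,4`
and arrows `a : 1 → 2`, `b : 1 → 3`, `c : 2 → 4`, `d : 3 → 4`. -/
structure QRep where
  V1 : Type
  V2 : Type
  V3 : Type
  V4 : Type
  [acg1 : AddCommGroup V1]
  [acg2 : AddCommGroup V2]
  [acg3 : AddCommGroup V3]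
  [acg4 : AddCommGroup V4]
  [mod1 : Module k V1]
  [mod2 : Module k V2]
  [mod3 : Module k V3]
  [mod4 : Module k V4]
  [fin1 : FiniteDimensional k V1]
  [fin2 : FiniteDimensional k V2]
  [fin3 : FiniteDimensional k V3]
  [fin4 : FiniteDimensional k V4]
  ma : V1 →ₗ[k] V2
  mb : V1 →ₗ[k] V3
  mc : V2 →ₗ[k] V4
  md : V3 →ₗ[k] V4

attribute [instance] QRep.acg1 QRep.acg2 QRep.acg3 QRep.acg4
  QRep.mod1 QRep.mod2 QRep.mod3 QRep.mod4
  QRep.fin1 QRep.fin2 QRep.fin3 QRep.fin4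

variable {k}

/-- Morphisms of representations of `Q`. -/
@[ext]
structure QHom (M N : QRep k) where
  f1 : M.V1 →ₗ[k] N.V1
  f2 : M.V2 →ₗ[k] N.V2
  f3 : M.V3 →ₗ[k] N.V3
  f4 : M.V4 →ₗ[k] N.V4
  comm_a : f2 ∘ₗ M.ma = N.ma ∘ₗ f1
  comm_b : f3 ∘ₗ M.mb = N.mb ∘ₗ f1
  comm_c : f4 ∘ₗ M.mc = N.mc ∘ₗ f2
  comm_d : f4 ∘ₗ M.md = N.md ∘ₗ f3

/-- Two representations are isomorphic iff there is a morphism all of whose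
components are bijective. -/
def QIso (M N : QRep k) : Prop :=
  ∃ f : QHom M N, Function.Bijective f.f1 ∧ Function.Bijective f.f2 ∧
    Function.Bijective f.f3 ∧ Function.Bijective f.f4

/-- The zero representation(s). -/
def QRep.IsZeroRep (M : QRep k) : Prop :=
  Subsingleton M.V1 ∧ Subsingleton M.V2 ∧ Subsingleton M.V3 ∧ Subsingleton M.V4

/-- Vertexwise direct sum of representations. -/
def QRep.dsum (M N : QRep k) : QRep k where
  V1 := M.V1 × N.V1
  V2 := M.V2 × N.V2
  V3 := M.V3 × N.V3
  V4 := M.V4 × N.V4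
  ma := M.ma.prodMap N.ma
  mb := M.mb.prodMap N.mb
  mc := M.mc.prodMap N.mc
  md := M.md.prodMap N.md

/-- Direct sum of `n` copies of a representation. -/
def QRep.dpow (M : QRep k) (n : ℕ) : QRep k where
  V1 := Fin n → M.V1
  V2 := Fin n → M.V2
  V3 := Fin n → M.V3
  V4 := Fin n → M.V4
  ma := M.ma.compLeft (Fin n)
  mb := M.mb.compLeft (Fin n)
  mc := M.mc.compLeft (Fin n)
  md := M.md.compLeft (Fin n)

/-- A representation is indecomposable if it is nonzero and not isomorphic to a
direct sum of two nonzero representations. -/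
def QRep.Indecomposable (M : QRep k) : Prop :=
  ¬ M.IsZeroRep ∧ ∀ A B : QRep k, QIso M (A.dsum B) → A.IsZeroRep ∨ B.IsZeroRep

/-- `0 → A → B → C → 0` is short exact (vertexwise). -/
def QShortExact {A B C : QRep k} (f : QHom A B) (g : QHom B C) : Prop :=
  (Function.Injective f.f1 ∧ Function.Injective f.f2 ∧
    Function.Injective f.f3 ∧ Function.Injective f.f4) ∧
  (Function.Surjective g.f1 ∧ Function.Surjective g.f2 ∧
    Function.Surjective g.f3 ∧ Function.Surjective g.f4) ∧
  (LinearMap.range f.f1 = LinearMap.ker g.f1 ∧ LinearMap.range f.f2 = LinearMap.ker g.f2 ∧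
    LinearMap.range f.f3 = LinearMap.ker g.f3 ∧ LinearMap.range f.f4 = LinearMap.ker g.f4)

variable (k)

/-- The `n×n` Jordan block with eigenvalue `lam`, as a linear endomorphism of `kⁿ`. -/
def jordan (n : ℕ) (lam : k) : (Fin n → k) →ₗ[k] (Fin n → k) :=
  Matrix.mulVecLin (Matrix.of fun i j : Fin n =>
    if i = j then lam else if (i : ℕ) + 1 = (j : ℕ) then 1 else 0)

/-- The representation `M_n(λ) = (kⁿ,kⁿ,kⁿ,kⁿ; id,id,id,J_n(λ))`. -/
def Mlam (n : ℕ) (lam : k) : QRep k where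
  V1 := Fin n → k
  V2 := Fin n → k
  V3 := Fin n → k
  V4 := Fin n → k
  ma := LinearMap.id
  mb := LinearMap.id
  mc := LinearMap.id
  md := jordan k n lam

/-- The indecomposable projective `P₁ = (k,k,k,k²)`. -/
def P1 : QRep k where
  V1 := k
  V2 := k
  V3 := k
  V4 := k × k
  ma := LinearMap.id
  mb := LinearMap.id
  mc := LinearMap.inl k k k
  md := LinearMap.inr k k k

/-- The indecomposable projective `P₂ = (0,k,0,k)`. -/
def P2 : QRep k where
  V1 := Fin 0 → k
  V2 := k
  V3 := Fin 0 → k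
  V4 := k
  ma := 0
  mb := 0
  mc := LinearMap.id
  md := 0

/-- The indecomposable projective `P₃ = (0,0,k,k)`. -/
def P3 : QRep k where
  V1 := Fin 0 → k
  V2 := Fin 0 → k
  V3 := k
  V4 := k
  ma := 0
  mb := 0
  mc := 0
  md := LinearMap.id

/-- The indecomposable projective `P₄ = (0,0,0,k)`. -/
def P4 : QRep k where
  V1 := Fin 0 → k
  V2 := Fin 0 → k
  V3 := Fin 0 → k
  V4 := k
  ma := 0
  mb := 0
  mc := 0
  md := 0

attribute [reducible] P1 P2 P3 P4 QRep.dsum QRep.dpow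

variable (k : Type) [Field k]

def Amap (n : ℕ) : (Fin (n+1) → k) →ₗ[k] (Fin n → k) := LinearMap.funLeft k k Fin.castSucc
def Bmap (n : ℕ) : (Fin (n+1) → k) →ₗ[k] (Fin n → k) := LinearMap.funLeft k k Fin.succ

variable {k}

lemma toeplitz {n : ℕ} (H : Fin (n+1) → Fin (n+1) → k)
    (rec' : ∀ i j : Fin n, H i.castSucc j.castSucc = H i.succ j.succ)
    (Z1 : ∀ i : Fin n, H i.castSucc (Fin.last n) = 0)
    (Z2 : ∀ i : Fin n, H i.succ 0 = 0) :
    ∀ i j, H i j = if i = j then H 0 0 else 0 := by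
  have shift : ∀ (m i j : ℕ) (hi : i + m ≤ n) (hj : j + m ≤ n),
      H ⟨i, by omega⟩ ⟨j, by omega⟩ = H ⟨i + m, by omega⟩ ⟨j + m, by omega⟩ := by
    intro m
    induction m with
    | zero => intro i j hi hj; rfl
    | succ m ih =>
      intro i j hi hj
      have step := rec' ⟨i + m, by omega⟩ ⟨j + m, by omega⟩
      simp only [Fin.castSucc_mk, Fin.succ_mk] at step
      calc H ⟨i, by omega⟩ ⟨j, by omega⟩ = H ⟨i + m, by omega⟩ ⟨j + m, by omega⟩ :=
            ih i j (by omega) (by omega)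
        _ = H ⟨i + (m+1), by omega⟩ ⟨j + (m+1), by omega⟩ := step
  intro i j
  rcases lt_trichotomy (i : ℕ) (j : ℕ) with hij | hij | hij
  · rw [if_neg (by intro hh; rw [hh] at hij; omega)]
    have hs := shift (n - (j:ℕ)) (i:ℕ) (j:ℕ) (by omega) (by omega)
    rw [Fin.eta, Fin.eta] at hs
    rw [hs]
    have h1 : (⟨(i:ℕ) + (n - (j:ℕ)), by omega⟩ : Fin (n+1)) = Fin.castSucc ⟨(i:ℕ) + (n - (j:ℕ)), by omega⟩ := rfl
    have hlast : (⟨(j:ℕ) + (n - (j:ℕ)), by omega⟩ : Fin (n+1)) = Fin.last n := by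
      apply Fin.ext; simp; omega
    rw [h1, hlast]
    exact Z1 _
  · rw [if_pos (Fin.ext hij)]
    have hs := shift (i:ℕ) 0 0 (by omega) (by omega)
    have h1 : (⟨0 + (i:ℕ), by omega⟩ : Fin (n+1)) = i := by apply Fin.ext; simp
    have h0 : (⟨0, by omega⟩ : Fin (n+1)) = 0 := rfl
    rw [h1, h0] at hs
    have hj' : i = j := Fin.ext hij
    rw [← hj', ← hs]
  · rw [if_neg (by intro hh; rw [hh] at hij; omega)]
    have hs := shift (j:ℕ) ((i:ℕ) - (j:ℕ)) 0 (by omega) (by omega)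
    have hi' : (⟨(i:ℕ) - (j:ℕ) + (j:ℕ), by omega⟩ : Fin (n+1)) = i := by apply Fin.ext; simp; omega
    have hj' : (⟨0 + (j:ℕ), by omega⟩ : Fin (n+1)) = j := by apply Fin.ext; simp
    rw [hi', hj'] at hs
    rw [← hs]
    convert Z2 ⟨(i:ℕ) - (j:ℕ) - 1, by omega⟩ using 2
    apply Fin.ext; simp; omega
    rfl

lemma scalar_lemma (n : ℕ) (h : (Fin (n+1) → k) →ₗ[k] (Fin (n+1) → k))
    (g : (Fin n → k) →ₗ[k] (Fin n → k))
    (hA : g ∘ₗ Amap k n = Amap k n ∘ₗ h) (hB : g ∘ₗ Bmap k n = Bmap k n ∘ₗ h) :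
    ∃ c : k, (∀ v, h v = c • v) ∧ (∀ v, g v = c • v) := by
  set e : Fin (n+1) → (Fin (n+1) → k) := fun j => Pi.single j 1 with he
  set e' : Fin n → (Fin n → k) := fun j => Pi.single j 1 with he'
  set H : Fin (n+1) → Fin (n+1) → k := fun i j => h (e j) i with hH
  set G : Fin n → Fin n → k := fun i j => g (e' j) i with hG
  have fact1 : ∀ j : Fin n, e (Fin.castSucc j) ∘ Fin.castSucc = e' j := by
    intro j; funext i
    simp [he, he', Function.comp, Pi.single_apply, Fin.castSucc_inj]
  have fact2 : e (Fin.last n) ∘ Fin.castSucc = 0 := by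
    funext i; simp [he, Function.comp, Pi.single_apply, ne_of_lt (Fin.castSucc_lt_last i)]
  have fact3 : ∀ j : Fin n, e (Fin.succ j) ∘ Fin.succ = e' j := by
    intro j; funext i
    simp [he, he', Function.comp, Pi.single_apply, Fin.succ_inj]
  have fact4 : e (0 : Fin (n+1)) ∘ Fin.succ = 0 := by
    funext i; simp [Function.comp, he, Pi.single_apply, Fin.succ_ne_zero]
  have R1 : ∀ (i j : Fin n), G i j = H (Fin.castSucc i) (Fin.castSucc j) := by
    intro i j
    have := congrFun (LinearMap.congr_fun hA (e (Fin.castSucc j))) i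
    simpa [Amap, LinearMap.funLeft, hH, hG, fact1 j] using this
  have Z1 : ∀ i : Fin n, H (Fin.castSucc i) (Fin.last n) = 0 := by
    intro i
    have := congrFun (LinearMap.congr_fun hA (e (Fin.last n))) i
    simpa [Amap, LinearMap.funLeft, hH, fact2] using this.symm
  have R2 : ∀ (i j : Fin n), G i j = H (Fin.succ i) (Fin.succ j) := by
    intro i j
    have := congrFun (LinearMap.congr_fun hB (e (Fin.succ j))) i
    simpa [Bmap, LinearMap.funLeft, hH, hG, fact3 j] using this
  have Z2 : ∀ i : Fin n, H (Fin.succ i) 0 = 0 := by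
    intro i
    have := congrFun (LinearMap.congr_fun hB (e 0)) i
    simpa [Bmap, LinearMap.funLeft, hH, fact4] using this.symm
  have rec' : ∀ (i j : Fin n), H (Fin.castSucc i) (Fin.castSucc j) = H (Fin.succ i) (Fin.succ j) :=
    fun i j => (R1 i j).symm.trans (R2 i j)
  have Hfull := toeplitz H rec' Z1 Z2
  set c : k := H 0 0 with hc
  have Gfull : ∀ i j : Fin n, G i j = if i = j then c else 0 := by
    intro i j
    rw [R1, Hfull]
    simp [Fin.castSucc_inj]
  have expand : ∀ (m : ℕ) (T : (Fin m → k) →ₗ[k] (Fin m → k))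
      (hT : ∀ i j : Fin m, T (Pi.single j 1) i = if i = j then c else 0) (v : Fin m → k),
      T v = c • v := by
    intro m T hT v
    have hv : v = ∑ j, Pi.single j (v j) := by
      rw [Finset.univ_sum_single]
    funext i
    conv_lhs => rw [hv]
    rw [map_sum]
    simp only [Finset.sum_apply]
    have key : ∀ j : Fin m, T (Pi.single j (v j)) i = if i = j then c * v j else 0 := by
      intro j
      have hs : Pi.single j (v j) = v j • (Pi.single j (1:k) : Fin m → k) := by
        funext x; by_cases hx : x = j <;> simp [Pi.single_apply, hx]
      rw [hs, map_smul]
      simp only [Pi.smul_apply, hT i j, smul_eq_mul]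
      split <;> ring
    rw [Finset.sum_congr rfl (fun j _ => key j)]
    simp
  exact ⟨c, expand (n+1) h (fun i j => Hfull i j) , expand n g (fun i j => Gfull i j)⟩

lemma proj_zero_case {VA VB VM : Type} [AddCommGroup VA] [Module k VA] [AddCommGroup VB]
    [Module k VB] [AddCommGroup VM] [Module k VM]
    (F : VM →ₗ[k] VA × VB) (hb : Function.Bijective F)
    (hzero : ∀ v, (LinearEquiv.ofBijective F hb).symm
      ((LinearMap.prodMap (LinearMap.id : VA →ₗ[k] VA) (0 : VB →ₗ[k] VB)) (F v)) = 0) :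
    Subsingleton VA := by
  apply subsingleton_of_forall_eq 0
  intro a
  set E := LinearEquiv.ofBijective F hb with hE
  have hFE : ∀ x, F (E.symm x) = x := by
    intro x
    have := E.apply_symm_apply x
    simpa [hE] using this
  have h := hzero (E.symm (a, 0))
  rw [hFE] at h
  have h2 : (LinearMap.prodMap (LinearMap.id : VA →ₗ[k] VA) (0 : VB →ₗ[k] VB))
      ((a, 0) : VA × VB) = ((a, 0) : VA × VB) := by simp
  rw [h2] at h
  have h3 := (LinearEquiv.map_eq_zero_iff E.symm).mp h
  simpa using congrArg Prod.fst h3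

lemma proj_one_case {VA VB VM : Type} [AddCommGroup VA] [Module k VA] [AddCommGroup VB]
    [Module k VB] [AddCommGroup VM] [Module k VM]
    (F : VM →ₗ[k] VA × VB) (hb : Function.Bijective F)
    (hid : ∀ v, (LinearEquiv.ofBijective F hb).symm
      ((LinearMap.prodMap (LinearMap.id : VA →ₗ[k] VA) (0 : VB →ₗ[k] VB)) (F v)) = v) :
    Subsingleton VB := by
  apply subsingleton_of_forall_eq 0
  intro b
  set E := LinearEquiv.ofBijective F hb with hE
  have hFE : ∀ x, F (E.symm x) = x := by
    intro x
    have := E.apply_symm_apply x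
    simpa [hE] using this
  have h := hid (E.symm (0, b))
  rw [hFE] at h
  have h2 : (LinearMap.prodMap (LinearMap.id : VA →ₗ[k] VA) (0 : VB →ₗ[k] VB))
      ((0, b) : VA × VB) = ((0, 0) : VA × VB) := by simp
  rw [h2] at h
  have h3 := E.symm.injective h
  simpa using (congrArg Prod.snd h3).symm

variable (k)

def Mrep (n : ℕ) : QRep k where
  V1 := Fin (n+1) → k
  V2 := Fin n → k
  V3 := Fin n → k
  V4 := Fin n → k
  ma := Amap k n
  mb := Bmap k n
  mc := LinearMap.id
  md := LinearMap.id

lemma Mrep_indec (n : ℕ) : (Mrep k n).Indecomposable := by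
  constructor
  · rintro ⟨h1, -, -, -⟩
    have h1' : Subsingleton (Fin (n+1) → k) := h1
    have : (Pi.single (0 : Fin (n+1)) (1:k) : Fin (n+1) → k) = 0 := Subsingleton.elim _ _
    have h2 := congrFun this 0
    simp [Pi.single_apply] at h2
  · rintro A B ⟨f, hb1, hb2, hb3, hb4⟩
    set E1 := LinearEquiv.ofBijective f.f1 hb1 with hE1
    set E2 := LinearEquiv.ofBijective f.f2 hb2 with hE2
    set E3 := LinearEquiv.ofBijective f.f3 hb3 with hE3
    set E4 := LinearEquiv.ofBijective f.f4 hb4 with hE4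
    set p1 : (A.dsum B).V1 →ₗ[k] (A.dsum B).V1 :=
      LinearMap.prodMap (LinearMap.id : A.V1 →ₗ[k] A.V1) (0 : B.V1 →ₗ[k] B.V1) with hp1
    set p2 : (A.dsum B).V2 →ₗ[k] (A.dsum B).V2 :=
      LinearMap.prodMap (LinearMap.id : A.V2 →ₗ[k] A.V2) (0 : B.V2 →ₗ[k] B.V2) with hp2
    set p3 : (A.dsum B).V3 →ₗ[k] (A.dsum B).V3 :=
      LinearMap.prodMap (LinearMap.id : A.V3 →ₗ[k] A.V3) (0 : B.V3 →ₗ[k] B.V3) with hp3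
    set p4 : (A.dsum B).V4 →ₗ[k] (A.dsum B).V4 :=
      LinearMap.prodMap (LinearMap.id : A.V4 →ₗ[k] A.V4) (0 : B.V4 →ₗ[k] B.V4) with hp4
    set e1 : (Fin (n+1) → k) →ₗ[k] (Fin (n+1) → k) :=
      E1.symm.toLinearMap ∘ₗ p1 ∘ₗ f.f1 with he1
    set e2 : (Fin n → k) →ₗ[k] (Fin n → k) :=
      E2.symm.toLinearMap ∘ₗ p2 ∘ₗ f.f2 with he2
    set e3 : (Fin n → k) →ₗ[k] (Fin n → k) :=
      E3.symm.toLinearMap ∘ₗ p3 ∘ₗ f.f3 with he3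
    set e4 : (Fin n → k) →ₗ[k] (Fin n → k) :=
      E4.symm.toLinearMap ∘ₗ p4 ∘ₗ f.f4 with he4
    have hs1 : ∀ x, E1.symm (f.f1 x) = x := fun x =>
      (LinearEquiv.ofBijective f.f1 hb1).symm_apply_apply x
    have hs2 : ∀ x, E2.symm (f.f2 x) = x := fun x =>
      (LinearEquiv.ofBijective f.f2 hb2).symm_apply_apply x
    have hs3 : ∀ x, E3.symm (f.f3 x) = x := fun x =>
      (LinearEquiv.ofBijective f.f3 hb3).symm_apply_apply x
    have hs4 : ∀ x, E4.symm (f.f4 x) = x := fun x =>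
      (LinearEquiv.ofBijective f.f4 hb4).symm_apply_apply x
    have hf1 : ∀ x, f.f1 (E1.symm x) = x := fun x =>
      (LinearEquiv.ofBijective f.f1 hb1).apply_symm_apply x
    have inv_a : ∀ w, E2.symm ((A.dsum B).ma w) = Amap k n (E1.symm w) := by
      intro w
      obtain ⟨u, rfl⟩ := hb1.2 w
      exact (congrArg (⇑E2.symm) (LinearMap.congr_fun f.comm_a u).symm).trans
        ((hs2 (Amap k n u)).trans (congrArg (⇑(Amap k n)) (hs1 u)).symm)
    have inv_b : ∀ w, E3.symm ((A.dsum B).mb w) = Bmap k n (E1.symm w) := by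
      intro w
      obtain ⟨u, rfl⟩ := hb1.2 w
      exact (congrArg (⇑E3.symm) (LinearMap.congr_fun f.comm_b u).symm).trans
        ((hs3 (Bmap k n u)).trans (congrArg (⇑(Bmap k n)) (hs1 u)).symm)
    have inv_c : ∀ w, E4.symm ((A.dsum B).mc w) = E2.symm w := by
      intro w
      obtain ⟨u, rfl⟩ := hb2.2 w
      exact (congrArg (⇑E4.symm) (LinearMap.congr_fun f.comm_c u).symm).trans
        ((hs4 u).trans (hs2 u).symm)
    have inv_d : ∀ w, E4.symm ((A.dsum B).md w) = E3.symm w := by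
      intro w
      obtain ⟨u, rfl⟩ := hb3.2 w
      exact (congrArg (⇑E4.symm) (LinearMap.congr_fun f.comm_d u).symm).trans
        ((hs4 u).trans (hs3 u).symm)
    -- projector commutation
    have proj_a : ∀ w, p2 ((A.dsum B).ma w) = (A.dsum B).ma (p1 w) := by
      intro w
      show (LinearMap.prodMap _ _) ((A.ma.prodMap B.ma) w) = (A.ma.prodMap B.ma) ((LinearMap.prodMap _ _) w)
      cases w with | mk x y => simp
    have proj_b : ∀ w, p3 ((A.dsum B).mb w) = (A.dsum B).mb (p1 w) := by
      intro w
      show (LinearMap.prodMap _ _) ((A.mb.prodMap B.mb) w) = (A.mb.prodMap B.mb) ((LinearMap.prodMap _ _) w)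
      cases w with | mk x y => simp
    have proj_c : ∀ w, p4 ((A.dsum B).mc w) = (A.dsum B).mc (p2 w) := by
      intro w
      show (LinearMap.prodMap _ _) ((A.mc.prodMap B.mc) w) = (A.mc.prodMap B.mc) ((LinearMap.prodMap _ _) w)
      cases w with | mk x y => simp
    have proj_d : ∀ w, p4 ((A.dsum B).md w) = (A.dsum B).md (p3 w) := by
      intro w
      show (LinearMap.prodMap _ _) ((A.md.prodMap B.md) w) = (A.md.prodMap B.md) ((LinearMap.prodMap _ _) w)
      cases w with | mk x y => simp
    -- e commutation
    have fa : ∀ v, f.f2 (Amap k n v) = (A.dsum B).ma (f.f1 v) := by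
      intro v; exact LinearMap.congr_fun f.comm_a v
    have fb : ∀ v, f.f3 (Bmap k n v) = (A.dsum B).mb (f.f1 v) := by
      intro v; exact LinearMap.congr_fun f.comm_b v
    have fc : ∀ v, f.f4 v = (A.dsum B).mc (f.f2 v) := by
      intro v; exact LinearMap.congr_fun f.comm_c v
    have fd : ∀ v, f.f4 v = (A.dsum B).md (f.f3 v) := by
      intro v; exact LinearMap.congr_fun f.comm_d v
    have ecomm_a : e2 ∘ₗ Amap k n = Amap k n ∘ₗ e1 := by
      apply LinearMap.ext; intro v
      show E2.symm (p2 (f.f2 (Amap k n v))) = Amap k n (E1.symm (p1 (f.f1 v)))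
      exact (congrArg (fun w => E2.symm (p2 w)) (LinearMap.congr_fun f.comm_a v)).trans
        ((congrArg (⇑E2.symm) (proj_a (f.f1 v))).trans (inv_a (p1 (f.f1 v))))
    have ecomm_b : e3 ∘ₗ Bmap k n = Bmap k n ∘ₗ e1 := by
      apply LinearMap.ext; intro v
      show E3.symm (p3 (f.f3 (Bmap k n v))) = Bmap k n (E1.symm (p1 (f.f1 v)))
      exact (congrArg (fun w => E3.symm (p3 w)) (LinearMap.congr_fun f.comm_b v)).trans
        ((congrArg (⇑E3.symm) (proj_b (f.f1 v))).trans (inv_b (p1 (f.f1 v))))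
    have e42 : e4 = e2 := by
      apply LinearMap.ext; intro v
      show E4.symm (p4 (f.f4 v)) = E2.symm (p2 (f.f2 v))
      exact (congrArg (fun w => E4.symm (p4 w)) (LinearMap.congr_fun f.comm_c v)).trans
        ((congrArg (⇑E4.symm) (proj_c (f.f2 v))).trans (inv_c (p2 (f.f2 v))))
    have e43 : e4 = e3 := by
      apply LinearMap.ext; intro v
      show E4.symm (p4 (f.f4 v)) = E3.symm (p3 (f.f3 v))
      exact (congrArg (fun w => E4.symm (p4 w)) (LinearMap.congr_fun f.comm_d v)).trans
        ((congrArg (⇑E4.symm) (proj_d (f.f3 v))).trans (inv_d (p3 (f.f3 v))))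
    obtain ⟨c, hc1, hc2⟩ := scalar_lemma n e1 e2 ecomm_a (by rw [← e42, e43]; exact ecomm_b)
    -- idempotency of e1 gives c*c = c
    have hproj1 : ∀ w, p1 (p1 w) = p1 w := by
      intro w; cases w with | mk x y => rfl
    have idem : ∀ v, e1 (e1 v) = e1 v := by
      intro v
      show E1.symm (p1 (f.f1 (e1 v))) = e1 v
      have h1 : f.f1 (e1 v) = p1 (f.f1 v) := hf1 (p1 (f.f1 v))
      rw [h1]
      show E1.symm (p1 (p1 (f.f1 v))) = E1.symm (p1 (f.f1 v))
      rw [hproj1]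
    have hcc : c * c = c := by
      have h0 := idem (Pi.single 0 1)
      simp only [hc1] at h0
      simpa [Pi.single_apply] using congrFun h0 0
    -- the four components equal c • id pointwise
    have h3 : ∀ v, e3 v = c • v := by intro v; rw [← e43, e42]; exact hc2 v
    have h4 : ∀ v, e4 v = c • v := by intro v; rw [e42]; exact hc2 v
    have hc01 : c = 0 ∨ c = 1 := by
      have hz : c * (c - 1) = 0 := by rw [mul_sub, mul_one, hcc, sub_self]
      rcases mul_eq_zero.mp hz with h | h
      · exact Or.inl h
      · exact Or.inr (sub_eq_zero.mp h)
    rcases hc01 with hc0 | hc0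
    · left
      have q1 : ∀ v, E1.symm (p1 (f.f1 v)) = 0 := by
        intro (v : Fin (n+1) → k)
        have h := hc1 v
        rw [hc0, zero_smul, he1] at h
        exact h
      have q2 : ∀ v, E2.symm (p2 (f.f2 v)) = 0 := by
        intro (v : Fin n → k)
        have h := hc2 v
        rw [hc0, zero_smul, he2] at h
        exact h
      have q3 : ∀ v, E3.symm (p3 (f.f3 v)) = 0 := by
        intro (v : Fin n → k)
        have h := h3 v
        rw [hc0, zero_smul, he3] at h
        exact h
      have q4 : ∀ v, E4.symm (p4 (f.f4 v)) = 0 := by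
        intro (v : Fin n → k)
        have h := h4 v
        rw [hc0, zero_smul, he4] at h
        exact h
      exact ⟨proj_zero_case f.f1 hb1 q1, proj_zero_case f.f2 hb2 q2,
        proj_zero_case f.f3 hb3 q3, proj_zero_case f.f4 hb4 q4⟩
    · right
      have q1 : ∀ v, E1.symm (p1 (f.f1 v)) = v := by
        intro (v : Fin (n+1) → k)
        have h := hc1 v
        rw [hc0, one_smul, he1] at h
        exact h
      have q2 : ∀ v, E2.symm (p2 (f.f2 v)) = v := by
        intro (v : Fin n → k)
        have h := hc2 v
        rw [hc0, one_smul, he2] at h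
        exact h
      have q3 : ∀ v, E3.symm (p3 (f.f3 v)) = v := by
        intro (v : Fin n → k)
        have h := h3 v
        rw [hc0, one_smul, he3] at h
        exact h
      have q4 : ∀ v, E4.symm (p4 (f.f4 v)) = v := by
        intro (v : Fin n → k)
        have h := h4 v
        rw [hc0, one_smul, he4] at h
        exact h
      exact ⟨proj_one_case f.f1 hb1 q1, proj_one_case f.f2 hb2 q2,
        proj_one_case f.f3 hb3 q3, proj_one_case f.f4 hb4 q4⟩

/-- The map `g₄ : P₁ⁿ⁺¹ at vertex 4 → M at vertex 4`. -/
def G4 (n : ℕ) : (Fin (n+1) → k × k) →ₗ[k] (Fin n → k) :=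
  LinearMap.pi (fun i => LinearMap.fst k k k ∘ₗ LinearMap.proj i.castSucc
    + LinearMap.snd k k k ∘ₗ LinearMap.proj i.succ)

lemma G4_apply (n : ℕ) (w : Fin (n+1) → k × k) (i : Fin n) :
    G4 k n w i = (w i.castSucc).1 + (w i.succ).2 := by
  simp [G4, LinearMap.pi_apply]

/-- `g : P₁ⁿ⁺¹ → M`. -/
def Ghom (n : ℕ) : QHom ((P1 k).dpow (n+1)) (Mrep k n) where
  f1 := LinearMap.id
  f2 := Amap k n
  f3 := Bmap k n
  f4 := G4 k n
  comm_a := rfl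
  comm_b := rfl
  comm_c := by
    apply LinearMap.ext; intro v
    funext i
    show G4 k n (((P1 k).mc).compLeft (Fin (n+1)) v) i = Amap k n v i
    rw [G4_apply]
    simp [P1, LinearMap.compLeft, Amap, LinearMap.funLeft]
  comm_d := by
    apply LinearMap.ext; intro v
    funext i
    show G4 k n (((P1 k).md).compLeft (Fin (n+1)) v) i = Bmap k n v i
    rw [G4_apply]
    simp [P1, LinearMap.compLeft, Bmap, LinearMap.funLeft]

/-- components of `f₄`. -/
def C1 (n : ℕ) : Fin (n+1) → ((k × (k × (Fin n → k))) →ₗ[k] k) :=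
  Fin.lastCases (LinearMap.fst k k (k × (Fin n → k)))
    (fun j => LinearMap.proj j ∘ₗ LinearMap.snd k k (Fin n → k) ∘ₗ LinearMap.snd k k (k × (Fin n → k)))

def C2 (n : ℕ) : Fin (n+1) → ((k × (k × (Fin n → k))) →ₗ[k] k) :=
  Fin.cases (LinearMap.fst k k (Fin n → k) ∘ₗ LinearMap.snd k k (k × (Fin n → k)))
    (fun j => -(LinearMap.proj j ∘ₗ LinearMap.snd k k (Fin n → k) ∘ₗ LinearMap.snd k k (k × (Fin n → k))))

def F4 (n : ℕ) : (k × (k × (Fin n → k))) →ₗ[k] (Fin (n+1) → k × k) :=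
  LinearMap.pi (fun i => (C1 k n i).prod (C2 k n i))

lemma F4_castSucc_fst (n : ℕ) (v : k × (k × (Fin n → k))) (j : Fin n) :
    (F4 k n v j.castSucc).1 = v.2.2 j := by
  simp [F4, C1, LinearMap.pi_apply, LinearMap.prod_apply, Fin.lastCases_castSucc]

lemma F4_last_fst (n : ℕ) (v : k × (k × (Fin n → k))) :
    (F4 k n v (Fin.last n)).1 = v.1 := by
  simp [F4, C1, LinearMap.pi_apply, LinearMap.prod_apply, Fin.lastCases_last]

lemma F4_succ_snd (n : ℕ) (v : k × (k × (Fin n → k))) (j : Fin n) :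
    (F4 k n v j.succ).2 = -(v.2.2 j) := by
  simp [F4, C2, LinearMap.pi_apply, LinearMap.prod_apply, Fin.cases_succ]

lemma F4_zero_snd (n : ℕ) (v : k × (k × (Fin n → k))) :
    (F4 k n v 0).2 = v.2.1 := by
  simp [F4, C2, LinearMap.pi_apply, LinearMap.prod_apply]

lemma single_last_inj (n : ℕ) (x y : k)
    (h : (LinearMap.single k (fun _ : Fin (n+1) => k) (Fin.last n)) x
       = (LinearMap.single k (fun _ : Fin (n+1) => k) (Fin.last n)) y) : x = y := by
  have h' := congrFun h (Fin.last n)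
  simpa using h'

lemma single_zero_inj (n : ℕ) (x y : k)
    (h : (LinearMap.single k (fun _ : Fin (n+1) => k) 0) x
       = (LinearMap.single k (fun _ : Fin (n+1) => k) 0) y) : x = y := by
  have h' := congrFun h 0
  simpa using h'

/-- `f : P₂ ⊕ P₃ ⊕ P₄ⁿ → P₁ⁿ⁺¹`. -/
def Fhom (n : ℕ) : QHom ((P2 k).dsum ((P3 k).dsum ((P4 k).dpow n))) ((P1 k).dpow (n+1)) where
  f1 := 0
  f2 := LinearMap.single k (fun _ : Fin (n+1) => k) (Fin.last n) ∘ₗ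
    LinearMap.fst k k ((Fin 0 → k) × (Fin n → Fin 0 → k))
  f3 := LinearMap.single k (fun _ : Fin (n+1) => k) 0 ∘ₗ
    LinearMap.fst k k (Fin n → Fin 0 → k) ∘ₗ LinearMap.snd k (Fin 0 → k) (k × (Fin n → Fin 0 → k))
  f4 := F4 k n
  comm_a := by
    apply LinearMap.ext; intro v
    haveI : Subsingleton (((P2 k).dsum ((P3 k).dsum ((P4 k).dpow n))).V1) :=
      inferInstanceAs (Subsingleton ((Fin 0 → k) × ((Fin 0 → k) × (Fin n → Fin 0 → k))))
    rw [Subsingleton.elim v 0]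
    simp
  comm_b := by
    apply LinearMap.ext; intro v
    haveI : Subsingleton (((P2 k).dsum ((P3 k).dsum ((P4 k).dpow n))).V1) :=
      inferInstanceAs (Subsingleton ((Fin 0 → k) × ((Fin 0 → k) × (Fin n → Fin 0 → k))))
    rw [Subsingleton.elim v 0]
    simp
  comm_c := by
    apply LinearMap.ext; rintro ⟨x, u, t⟩
    show F4 k n ((x, (0, 0)) : k × (k × (Fin n → k))) =
      fun i => ((Pi.single (Fin.last n) x : Fin (n+1) → k) i, (0:k))
    funext i
    refine Prod.ext ?_ ?_
    · induction i using Fin.lastCases with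
      | last => rw [F4_last_fst]; simp
      | cast j => rw [F4_castSucc_fst]; simp [Pi.single_apply, (Fin.castSucc_lt_last j).ne]
    · induction i using Fin.cases with
      | zero => rw [F4_zero_snd]
      | succ j => rw [F4_succ_snd]; simp
  comm_d := by
    apply LinearMap.ext; rintro ⟨u, y, t⟩
    show F4 k n ((0, (y, 0)) : k × (k × (Fin n → k))) =
      fun i => ((0:k), (Pi.single (0 : Fin (n+1)) y : Fin (n+1) → k) i)
    funext i
    refine Prod.ext ?_ ?_
    · induction i using Fin.lastCases with
      | last => rw [F4_last_fst]
      | cast j => rw [F4_castSucc_fst]; rfl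
    · induction i using Fin.cases with
      | zero => rw [F4_zero_snd]; simp
      | succ j => rw [F4_succ_snd]; simp [Pi.single_apply, Fin.succ_ne_zero]

theorem stmt8' (n : ℕ) :
    ∃ M : QRep k, M.Indecomposable ∧
      Module.finrank k M.V1 = n+1 ∧ Module.finrank k M.V2 = n ∧
      Module.finrank k M.V3 = n ∧ Module.finrank k M.V4 = n ∧
      ∃ (f : QHom ((P2 k).dsum ((P3 k).dsum ((P4 k).dpow n))) ((P1 k).dpow (n+1)))
        (g : QHom ((P1 k).dpow (n+1)) M), QShortExact f g := by
  refine ⟨Mrep k n, Mrep_indec k n, ?_, ?_, ?_, ?_, Fhom k n, Ghom k n,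
    ⟨?_, ?_, ?_, ?_⟩, ⟨?_, ?_, ?_, ?_⟩, ⟨?_, ?_, ?_, ?_⟩⟩
  · exact Module.finrank_fin_fun k
  · exact Module.finrank_fin_fun k
  · exact Module.finrank_fin_fun k
  · exact Module.finrank_fin_fun k
  -- injectivity
  · intro a b _
    haveI : Subsingleton (((P2 k).dsum ((P3 k).dsum ((P4 k).dpow n))).V1) :=
      inferInstanceAs (Subsingleton ((Fin 0 → k) × ((Fin 0 → k) × (Fin n → Fin 0 → k))))
    exact Subsingleton.elim a b
  · intro a b hab
    haveI : Subsingleton (((P3 k).dsum ((P4 k).dpow n)).V2) :=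
      inferInstanceAs (Subsingleton ((Fin 0 → k) × (Fin n → Fin 0 → k)))
    exact Prod.ext (single_last_inj k n a.1 b.1 hab) (Subsingleton.elim _ _)
  · intro a b hab
    haveI : Subsingleton ((P2 k).V3) := inferInstanceAs (Subsingleton (Fin 0 → k))
    haveI : Subsingleton (((P4 k).dpow n).V3) :=
      inferInstanceAs (Subsingleton (Fin n → Fin 0 → k))
    exact Prod.ext (Subsingleton.elim _ _)
      (Prod.ext (single_zero_inj k n a.2.1 b.2.1 hab) (Subsingleton.elim _ _))
  · intro a b hab
    have hx : a.1 = b.1 :=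
      (F4_last_fst k n a).symm.trans
        ((congrArg Prod.fst (congrFun hab (Fin.last n))).trans (F4_last_fst k n b))
    have hy : a.2.1 = b.2.1 :=
      (F4_zero_snd k n a).symm.trans
        ((congrArg Prod.snd (congrFun hab (0 : Fin (n+1)))).trans (F4_zero_snd k n b))
    have hz : a.2.2 = b.2.2 := by
      funext j
      exact (F4_castSucc_fst k n a j).symm.trans
        ((congrArg Prod.fst (congrFun hab j.castSucc)).trans (F4_castSucc_fst k n b j))
    exact Prod.ext hx (Prod.ext hy hz)
  -- surjectivity
  · exact fun v => ⟨v, rfl⟩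
  · intro (u : Fin n → k)
    refine ⟨Fin.snoc u 0, ?_⟩
    show Amap k n (Fin.snoc u 0) = u
    funext i
    simp [Amap, LinearMap.funLeft, Fin.snoc_castSucc]
  · intro (u : Fin n → k)
    refine ⟨Fin.cons 0 u, ?_⟩
    show Bmap k n (Fin.cons 0 u) = u
    funext i
    simp [Bmap, LinearMap.funLeft, Fin.cons_succ]
  · intro (u : Fin n → k)
    refine ⟨((fun j => (@Fin.snoc n (fun _ => k) (u : Fin n → k) 0 j, (0:k))) : Fin (n+1) → k × k), ?_⟩
    show G4 k n _ = u
    funext i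
    rw [G4_apply]
    simp
  -- exactness
  · show LinearMap.range (0 : _ →ₗ[k] _) = LinearMap.ker (LinearMap.id : (Fin (n+1) → k) →ₗ[k] _)
    rw [LinearMap.range_zero, LinearMap.ker_id]
  · apply le_antisymm
    · rintro x ⟨⟨a, u⟩, rfl⟩
      apply LinearMap.mem_ker.mpr
      show Amap k n (Pi.single (Fin.last n) a) = 0
      funext i
      simp [Amap, LinearMap.funLeft, Pi.single_apply, (Fin.castSucc_lt_last i).ne]
    · intro x hx
      have hx' : ∀ i : Fin n, x i.castSucc = 0 := fun i => congrFun ((LinearMap.mem_ker (f := Amap k n)).mp hx) i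
      refine ⟨(x (Fin.last n), 0), ?_⟩
      show Pi.single (Fin.last n) (x (Fin.last n)) = x
      funext i
      induction i using Fin.lastCases with
      | last => simp
      | cast j => simp [Pi.single_apply, (Fin.castSucc_lt_last j).ne, hx' j]
  · apply le_antisymm
    · rintro x ⟨⟨u, a, t⟩, rfl⟩
      apply LinearMap.mem_ker.mpr
      show Bmap k n (Pi.single (0 : Fin (n+1)) a) = 0
      funext i
      simp [Bmap, LinearMap.funLeft, Pi.single_apply, Fin.succ_ne_zero]
    · intro x hx
      have hx' : ∀ i : Fin n, x i.succ = 0 := fun i => congrFun ((LinearMap.mem_ker (f := Bmap k n)).mp hx) i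
      refine ⟨(0, x 0, 0), ?_⟩
      show Pi.single (0 : Fin (n+1)) (x 0) = x
      funext i
      induction i using Fin.cases with
      | zero => simp
      | succ j => simp [Pi.single_apply, Fin.succ_ne_zero, hx' j]
  · apply le_antisymm
    · rintro w ⟨v, rfl⟩
      apply LinearMap.mem_ker.mpr
      show G4 k n (F4 k n v) = 0
      funext i
      rw [G4_apply, F4_castSucc_fst, F4_succ_snd]
      exact add_neg_cancel _
    · intro w hw
      have hw' : ∀ i : Fin n, (w i.castSucc).1 + (w i.succ).2 = 0 := by
        intro i
        have h := congrFun ((LinearMap.mem_ker (f := G4 k n)).mp hw) i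
        exact (G4_apply k n w i).symm.trans h
      refine ⟨((w (Fin.last n)).1, ((w 0).2, fun j => (w j.castSucc).1)), ?_⟩
      show F4 k n _ = w
      funext i
      refine Prod.ext ?_ ?_
      · induction i using Fin.lastCases with
        | last => exact F4_last_fst k n _
        | cast j => exact F4_castSucc_fst k n _ j
      · induction i using Fin.cases with
        | zero => exact F4_zero_snd k n _
        | succ j =>
          rw [F4_succ_snd]
          linear_combination -(hw' j)

/-- there is an indecomposable representation `M` of `Q` with the
given dimension vector together with a short exact sequence as indicated. -/
theorem stmt8 (k : Type) [Field k] (n : ℕ) :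
    ∃ M : QRep k, M.Indecomposable ∧
      Module.finrank k M.V1 = n+1 ∧ Module.finrank k M.V2 = n ∧
      Module.finrank k M.V3 = n ∧ Module.finrank k M.V4 = n ∧
      ∃ (f : QHom ((P2 k).dsum ((P3 k).dsum ((P4 k).dpow n))) ((P1 k).dpow (n+1))) (g : QHom ((P1 k).dpow (n+1)) M), QShortExact f g :=
  stmt8' k n
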